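/- Let G be a graph on n vertices and let x be a vertex of G with r neighbors and b = n − 1 − r non-neighbors. Then the number of induced copies of C5 in G containing x is at most r²b²/16, and moreover r²b²/16 ≤ ((n−1)/4)^4. -/

import Mathlib

set_option maxHeartbeats 1600000

/-- The 5-cycle on `Fin 5`. -/
def C5 : SimpleGraph (Fin 5) := SimpleGraph.fromRel (fun i j => j = i + 1)

/-- The number of induced copies of `C5` in `G` containing the vertex `x`. -/
noncomputable def c5Through {n : ℕ} (G : SimpleGraph (Fin n)) (x : Fin n) : ℕ :=
  Nat.card {s : Finset (Fin n) // s.card = 5 ∧ x ∈ s ∧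
    Nonempty (G.induce (s : Set (Fin n)) ≃g C5)}

lemma c5_adj_iff (i j : Fin 5) : C5.Adj i j ↔ i ≠ j ∧ (j = i + 1 ∨ i = j + 1) := Iff.rfl

instance : DecidableRel C5.Adj := fun i j => decidable_of_iff' _ (c5_adj_iff i j)

lemma c5_adj_shift (t k l : Fin 5) : C5.Adj (t + k) (t + l) ↔ C5.Adj k l := by
  rw [c5_adj_iff, c5_adj_iff]
  have h1 : (t + k = t + l) ↔ (k = l) := add_right_inj t
  have h2 : (t + l = t + k + 1) ↔ (l = k + 1) := by rw [add_assoc]; exact add_right_inj t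
  have h3 : (t + k = t + l + 1) ↔ (k = l + 1) := by rw [add_assoc]; exact add_right_inj t
  rw [h2, h3, ne_eq, ne_eq, h1]

lemma c5_extract {n : ℕ} (G : SimpleGraph (Fin n)) (x : Fin n) (s : Finset (Fin n))
    (h5 : s.card = 5) (hx : x ∈ s) (e : G.induce (s : Set (Fin n)) ≃g C5) :
    ∃ y : Fin 5 → Fin n, y 0 = x ∧ Function.Injective y ∧
      (∀ k l, G.Adj (y k) (y l) ↔ C5.Adj k l) ∧
      s = {y 0, y 1, y 2, y 3, y 4} := by
  set ex := e ⟨x, hx⟩ with hex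
  set y : Fin 5 → Fin n := fun k => ↑(e.symm (ex + k)) with hy
  have hy0 : y 0 = x := by
    simp only [hy, add_zero, hex, RelIso.symm_apply_apply]
  have hinj : Function.Injective y := by
    intro k l h
    have h2 := e.symm.injective (Subtype.ext h)
    exact add_left_cancel h2
  have hadj : ∀ k l, G.Adj (y k) (y l) ↔ C5.Adj k l := by
    intro k l
    have h1 : G.Adj (y k) (y l) ↔
        (G.induce (s : Set (Fin n))).Adj (e.symm (ex + k)) (e.symm (ex + l)) := Iff.rfl
    rw [h1, e.symm.map_adj_iff, c5_adj_shift]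
  refine ⟨y, hy0, hinj, hadj, ?_⟩
  have hmem : ∀ k, y k ∈ s := fun k => (e.symm (ex + k)).2
  have himg : ({y 0, y 1, y 2, y 3, y 4} : Finset (Fin n)) = Finset.image y Finset.univ := by
    have huniv : (Finset.univ : Finset (Fin 5)) = {0, 1, 2, 3, 4} := by decide
    rw [huniv]
    simp [Finset.image_insert]
  have hsub : ({y 0, y 1, y 2, y 3, y 4} : Finset (Fin n)) ⊆ s := by
    intro z hz
    simp only [Finset.mem_insert, Finset.mem_singleton] at hz
    rcases hz with h | h | h | h | h <;> exact h ▸ hmem _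
  have hcard : ({y 0, y 1, y 2, y 3, y 4} : Finset (Fin n)).card = 5 := by
    rw [himg, Finset.card_image_of_injective _ hinj]
    simp
  exact (Finset.eq_of_subset_of_card_le hsub (by rw [hcard, h5])).symm

open Finset in
theorem c5_through_key (n : ℕ) (G : SimpleGraph (Fin n)) [DecidableRel G.Adj] (x : Fin n) :
    16 * c5Through G x ≤ G.degree x ^ 2 * (Finset.univ \ insert x (G.neighborFinset x)).card ^ 2 := by
  classical
  set N := G.neighborFinset x with hN
  set B := Finset.univ \ insert x N with hB
  set r := G.degree x with hr
  -- the set of C5's through x, as a Finset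
  set Sfin := univ.filter (fun s : Finset (Fin n) => s.card = 5 ∧ x ∈ s ∧
      Nonempty (G.induce (s : Set (Fin n)) ≃g C5)) with hSfin
  have hX : c5Through G x = Sfin.card := by
    rw [c5Through, Nat.card_eq_fintype_card, hSfin, Fintype.card_subtype]
  -- the quadruple set
  set T := ((N ×ˢ N) ×ˢ B ×ˢ B).filter
      (fun q => G.Adj q.1.1 q.2.1 ∧ G.Adj q.1.2 q.2.2 ∧
        ¬G.Adj q.1.1 q.2.2 ∧ ¬G.Adj q.1.2 q.2.1) with hT
  set R : Finset (Fin n) → (Fin n × Fin n) × Fin n × Fin n → Prop :=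
    fun s q => s = insert x (insert q.1.1 (insert q.1.2 (insert q.2.1 {q.2.2}))) with hR
  -- Step 1 : 2 * Sfin.card ≤ T.card
  have step1 : Sfin.card * 2 ≤ T.card * 1 := by
    apply Finset.card_mul_le_card_mul R
    · -- every C5 gives at least two quadruples
      intro s hs
      rw [hSfin, mem_filter] at hs
      obtain ⟨-, h5, hx, ⟨e⟩⟩ := hs
      obtain ⟨y, hy0, hinj, hadj, hset⟩ := c5_extract G x s h5 hx e
      have hyne : ∀ {k l : Fin 5}, k ≠ l → y k ≠ y l := fun h h' => h (hinj h')
      have hmemN : ∀ k : Fin 5, C5.Adj 0 k → y k ∈ N := by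
        intro k hk
        rw [hN, SimpleGraph.mem_neighborFinset, ← hy0]
        exact (hadj 0 k).2 hk
      have hmemB : ∀ k : Fin 5, k ≠ 0 → ¬ C5.Adj 0 k → y k ∈ B := by
        intro k hk0 hk
        rw [hB, mem_sdiff]
        refine ⟨mem_univ _, ?_⟩
        rw [mem_insert]
        rintro (h | h)
        · exact hyne hk0 (h.trans hy0.symm)
        · rw [hN, SimpleGraph.mem_neighborFinset, ← hy0] at h
          exact hk ((hadj 0 k).1 h)
      have hy1 : y 1 ∈ N := hmemN 1 (by decide)
      have hy4 : y 4 ∈ N := hmemN 4 (by decide)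
      have hy2 : y 2 ∈ B := hmemB 2 (by decide) (by decide)
      have hy3 : y 3 ∈ B := hmemB 3 (by decide) (by decide)
      have hC : ∀ k l : Fin 5, C5.Adj k l → G.Adj (y k) (y l) := fun k l h => (hadj k l).2 h
      have hNC : ∀ k l : Fin 5, ¬ C5.Adj k l → ¬ G.Adj (y k) (y l) := fun k l h h2 => h ((hadj k l).1 h2)
      have hR1 : R s ((y 1, y 4), y 2, y 3) := by
        rw [hR, ← hy0, hset]
        ext z
        simp only [mem_insert, mem_singleton]
        tauto
      have hR2 : R s ((y 4, y 1), y 3, y 2) := by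
        rw [hR, ← hy0, hset]
        ext z
        simp only [mem_insert, mem_singleton]
        tauto
      have hT1 : ((y 1, y 4), y 2, y 3) ∈ T := by
        rw [hT, mem_filter, mem_product, mem_product, mem_product]
        exact ⟨⟨⟨hy1, hy4⟩, hy2, hy3⟩, hC 1 2 (by decide), hC 4 3 (by decide),
          hNC 1 3 (by decide), hNC 4 2 (by decide)⟩
      have hT2 : ((y 4, y 1), y 3, y 2) ∈ T := by
        rw [hT, mem_filter, mem_product, mem_product, mem_product]
        exact ⟨⟨⟨hy4, hy1⟩, hy3, hy2⟩, hC 4 3 (by decide), hC 1 2 (by decide),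
          hNC 4 2 (by decide), hNC 1 3 (by decide)⟩
      have hne : ((y 1, y 4), y 2, y 3) ≠ ((y 4, y 1), y 3, y 2) := by
        intro h
        have h14 : y 1 = y 4 := congrArg (fun q => q.1.1) h
        exact absurd (hinj h14) (by decide)
      refine Finset.one_lt_card.mpr ⟨_, ?_, _, ?_, hne⟩
      · rw [Finset.mem_bipartiteAbove]; exact ⟨hT1, hR1⟩
      · rw [Finset.mem_bipartiteAbove]; exact ⟨hT2, hR2⟩
    · -- every quadruple determines at most one s
      intro q _
      rw [Finset.card_le_one]
      intro s hs t ht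
      rw [Finset.mem_bipartiteBelow] at hs ht
      rw [hs.2, ht.2]
  -- Step 2: bound T.card by sums of products
  set A : Fin n → Finset (Fin n) := fun a => B.filter (G.Adj a) with hA
  set ind : Fin n → Fin n → Fin n → ℕ :=
    fun a b c => if (G.Adj a c ↔ G.Adj b c) then 0 else 1 with hind
  have step2 : T.card ≤ ∑ p ∈ N ×ˢ N, (A p.1 \ A p.2).card * (A p.2 \ A p.1).card := by
    rw [Finset.card_eq_sum_card_fiberwise (f := fun q => q.1) (t := N ×ˢ N) ?hf]
    case hf =>
      intro q hq
      rw [hT, mem_coe, mem_filter, mem_product] at hq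
      exact hq.1.1
    apply Finset.sum_le_sum
    intro p hp
    rw [← Finset.card_product]
    apply Finset.card_le_card_of_injOn (fun q => q.2)
    · intro q hq
      rw [mem_coe, mem_filter] at hq
      obtain ⟨hqT, hq1⟩ := hq
      rw [hT, mem_filter, mem_product, mem_product, mem_product] at hqT
      obtain ⟨⟨-, hc, hd⟩, h1, h2, h3, h4⟩ := hqT
      rw [hq1] at h1 h2 h3 h4
      rw [mem_coe, mem_product, mem_sdiff, mem_sdiff]
      refine ⟨⟨mem_filter.mpr ⟨hc, h1⟩, fun hmem => h4 (mem_filter.mp hmem).2⟩,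
        mem_filter.mpr ⟨hd, h2⟩, fun hmem => h3 (mem_filter.mp hmem).2⟩
    · intro q hq q' hq' hqq
      rw [mem_coe, mem_filter] at hq hq'
      exact Prod.ext (hq.2.trans hq'.2.symm) hqq
  have hsum : ∀ a b : Fin n, (A a \ A b).card + (A b \ A a).card = ∑ c ∈ B, ind a b c := by
    intro a b
    have h1 : A a \ A b = B.filter (fun c => G.Adj a c ∧ ¬ G.Adj b c) := by
      ext c
      simp only [hA, mem_sdiff, mem_filter]
      tauto
    have h2 : A b \ A a = B.filter (fun c => G.Adj b c ∧ ¬ G.Adj a c) := by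
      ext c
      simp only [hA, mem_sdiff, mem_filter]
      tauto
    rw [h1, h2, Finset.card_filter, Finset.card_filter, ← Finset.sum_add_distrib]
    apply Finset.sum_congr rfl
    intro c _
    by_cases hac : G.Adj a c <;> by_cases hbc : G.Adj b c <;> simp [hind, hac, hbc]
  have step34 : 4 * T.card ≤ ∑ c ∈ B, ∑ d ∈ B, ∑ p ∈ N ×ˢ N, ind p.1 p.2 c * ind p.1 p.2 d := by
    calc 4 * T.card ≤ 4 * ∑ p ∈ N ×ˢ N, (A p.1 \ A p.2).card * (A p.2 \ A p.1).card :=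
          Nat.mul_le_mul_left 4 step2
    _ = ∑ p ∈ N ×ˢ N, 4 * ((A p.1 \ A p.2).card * (A p.2 \ A p.1).card) := Finset.mul_sum _ _ _
    _ ≤ ∑ p ∈ N ×ˢ N, ∑ c ∈ B, ∑ d ∈ B, ind p.1 p.2 c * ind p.1 p.2 d := by
        apply Finset.sum_le_sum
        intro p _
        have h4 : 4 * ((A p.1 \ A p.2).card * (A p.2 \ A p.1).card) ≤
            ((A p.1 \ A p.2).card + (A p.2 \ A p.1).card) ^ 2 := by
          nlinarith [two_mul_le_add_sq (A p.1 \ A p.2).card (A p.2 \ A p.1).card]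
        refine h4.trans ?_
        rw [hsum, sq, Finset.sum_mul_sum]
    _ = ∑ c ∈ B, ∑ p ∈ N ×ˢ N, ∑ d ∈ B, ind p.1 p.2 c * ind p.1 p.2 d := Finset.sum_comm
    _ = ∑ c ∈ B, ∑ d ∈ B, ∑ p ∈ N ×ˢ N, ind p.1 p.2 c * ind p.1 p.2 d := by
        exact Finset.sum_congr rfl (fun c _ => Finset.sum_comm)
  have step5 : ∀ c d : Fin n, 2 * ∑ p ∈ N ×ˢ N, ind p.1 p.2 c * ind p.1 p.2 d ≤ r ^ 2 := by
    intro c d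
    set g : Fin n → Bool × Bool := fun a => (decide (G.Adj a c), decide (G.Adj a d)) with hg
    set m : Bool × Bool → ℕ := fun v => (N.filter (fun a => g a = v)).card with hm
    have hprod : ∀ a b : Fin n, ind a b c * ind a b d =
        if g b = (!(g a).1, !(g a).2) then 1 else 0 := by
      intro a b
      by_cases h1 : G.Adj a c <;> by_cases h2 : G.Adj b c <;>
        by_cases h3 : G.Adj a d <;> by_cases h4 : G.Adj b d <;>
        simp [hind, hg, h1, h2, h3, h4, Prod.ext_iff, iff_iff_implies_and_implies]
    have hinner : ∑ p ∈ N ×ˢ N, ind p.1 p.2 c * ind p.1 p.2 d =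
        ∑ a ∈ N, m (!(g a).1, !(g a).2) := by
      rw [Finset.sum_product]
      apply Finset.sum_congr rfl
      intro a _
      rw [show m (!(g a).1, !(g a).2) =
        (N.filter (fun b => g b = (!(g a).1, !(g a).2))).card from rfl, Finset.card_filter]
      exact Finset.sum_congr rfl (fun b _ => hprod a b)
    have hgroup : ∀ f : Bool × Bool → ℕ, ∑ a ∈ N, f (g a) = ∑ v : Bool × Bool, m v * f v := by
      intro f
      rw [← Finset.sum_fiberwise_of_maps_to (g := g) (fun a _ => Finset.mem_univ (g a))
        (fun a => f (g a))]
      apply Finset.sum_congr rfl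
      intro v _
      rw [Finset.sum_congr rfl (fun a ha => by rw [(Finset.mem_filter.mp ha).2]),
        Finset.sum_const, smul_eq_mul]
    have hcardN : N.card = ∑ v : Bool × Bool, m v := by
      have := hgroup (fun _ => 1)
      simpa using this
    rw [hinner, hgroup (fun v => m (!v.1, !v.2))]
    have hrN : r = N.card := (SimpleGraph.card_neighborFinset_eq_degree G x).symm
    rw [hrN, hcardN]
    rw [Fintype.sum_prod_type, Fintype.sum_prod_type]
    simp only [Finset.sum_boole, Fintype.sum_bool, Bool.not_true, Bool.not_false]
    set a00 := m (false, false)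
    set a01 := m (false, true)
    set a10 := m (true, false)
    set a11 := m (true, true)
    nlinarith [two_mul_le_add_sq a00 a11, two_mul_le_add_sq a01 a10,
      Nat.zero_le (a00*a01), Nat.zero_le (a00*a10), Nat.zero_le (a01*a11),
      Nat.zero_le (a10*a11)]
  calc 16 * c5Through G x = 8 * (Sfin.card * 2) := by rw [hX]; ring
    _ ≤ 8 * (T.card * 1) := Nat.mul_le_mul_left 8 step1
    _ = 2 * (4 * T.card) := by ring
    _ ≤ 2 * ∑ c ∈ B, ∑ d ∈ B, ∑ p ∈ N ×ˢ N, ind p.1 p.2 c * ind p.1 p.2 d :=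
        Nat.mul_le_mul_left 2 step34
    _ ≤ ∑ c ∈ B, ∑ d ∈ B, r ^ 2 := by
        rw [Finset.mul_sum]
        apply Finset.sum_le_sum
        intro c _
        rw [Finset.mul_sum]
        exact Finset.sum_le_sum (fun d _ => step5 c d)
    _ = r ^ 2 * B.card ^ 2 := by
        rw [Finset.sum_const, Finset.sum_const, smul_eq_mul, smul_eq_mul]
        ring

/-- If `x` is a vertex of a graph `G` on `n` vertices with `r` neighbors and
`b = n − 1 − r` non-neighbors, then the number of induced copies of `C5` containing `x`
is at most `r²b²/16`, and `r²b²/16 ≤ ((n−1)/4)⁴`. -/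
theorem c5_through_vertex_bound (n : ℕ) (G : SimpleGraph (Fin n))
    [DecidableRel G.Adj] (x : Fin n) (r b : ℕ)
    (hr : r = G.degree x) (hb : b = n - 1 - r) :
    (c5Through G x : ℝ) ≤ (r : ℝ) ^ 2 * (b : ℝ) ^ 2 / 16 ∧
    (r : ℝ) ^ 2 * (b : ℝ) ^ 2 / 16 ≤ (((n : ℝ) - 1) / 4) ^ 4 := by
  classical
  have hn : 0 < n := x.pos
  have key := c5_through_key n G x
  have hdeg : G.degree x < n := by
    have := SimpleGraph.degree_lt_card_verts (G := G) x
    simpa using this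
  have hBcard : (Finset.univ \ insert x (G.neighborFinset x)).card = n - 1 - r := by
    rw [Finset.card_sdiff_of_subset (Finset.subset_univ _), Finset.card_insert_of_notMem
      (SimpleGraph.notMem_neighborFinset_self G x), SimpleGraph.card_neighborFinset_eq_degree,
      Finset.card_univ, Fintype.card_fin, ← hr]
    omega
  rw [hBcard, ← hr, ← hb] at key
  constructor
  · have h16 : (16 : ℝ) * (c5Through G x : ℝ) ≤ (r : ℝ) ^ 2 * (b : ℝ) ^ 2 := by
      exact_mod_cast key
    linarith
  · have hsum : r + b = n - 1 := by omega
    have hcast : (r : ℝ) + (b : ℝ) = (n : ℝ) - 1 := by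
      have h2 : ((r + b : ℕ) : ℝ) = ((n - 1 : ℕ) : ℝ) := by rw [hsum]
      rw [Nat.cast_sub hn] at h2
      push_cast at h2
      linarith
    rw [← hcast]
    have h4 : 4 * (r : ℝ) * b ≤ ((r : ℝ) + b) ^ 2 := by nlinarith [sq_nonneg ((r : ℝ) - b)]
    have h5 : (4 * (r : ℝ) * b) ^ 2 ≤ (((r : ℝ) + b) ^ 2) ^ 2 :=
      pow_le_pow_left₀ (by positivity) h4 2
    nlinarith [h5]
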